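/- Let q₀ ≥ 1 and k₁,...,k_s ≥ 1 with s = q₀. Let M be the (s + Σkᵢ) × (Σkᵢ) block matrix whose top s × (Σkᵢ) block has i-th block-row equal to the all-ones row pattern (𝒥₁ 𝒥₂ ... 𝒥_s) where 𝒥ᵢ is s × kᵢ with the first i−1 rows zero and remaining rows all ones, and whose bottom block is the block-diagonal identity diag(I_{k₁},...,I_{k_s}). Then MᵀM − I has rank exactly s, is positive semidefinite, and consequently the matrix A = −(MMᵀ − I) is symmetric with exactly s negative eigenvalues and nullity k₁ + k₂ + ⋯ + k_s − s. -/

import Mathlib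

open Matrix Finset Module

lemma aux_eig_card {n : Type*} [Fintype n] [DecidableEq n] {A : Matrix n n ℝ}
    (hA : A.IsHermitian) (c : ℝ) :
    (Finset.univ.filter fun i => hA.eigenvalues i = c).card
      = Module.finrank ℝ (LinearMap.ker (A - c • 1).mulVecLin) := by
  have hdec : A - c • 1 = (hA.eigenvectorUnitary : Matrix n n ℝ) *
      diagonal (fun i => hA.eigenvalues i - c) *
      (star (hA.eigenvectorUnitary : Matrix n n ℝ)) := by
    have h1 : (c • (1 : Matrix n n ℝ)) = (hA.eigenvectorUnitary : Matrix n n ℝ) *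
        (c • (1 : Matrix n n ℝ)) * (star (hA.eigenvectorUnitary : Matrix n n ℝ)) := by
      rw [mul_smul_comm, smul_mul_assoc, mul_one,
        (Matrix.mem_unitaryGroup_iff).mp (hA.eigenvectorUnitary).2]
    calc A - c • 1 = (hA.eigenvectorUnitary : Matrix n n ℝ) *
        diagonal (RCLike.ofReal ∘ hA.eigenvalues) *
        (star (hA.eigenvectorUnitary : Matrix n n ℝ)) - c • 1 := by
          conv_lhs => rw [hA.spectral_theorem, Unitary.conjStarAlgAut_apply]
      _ = (hA.eigenvectorUnitary : Matrix n n ℝ) *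
        (diagonal (RCLike.ofReal ∘ hA.eigenvalues) - c • 1) *
        (star (hA.eigenvectorUnitary : Matrix n n ℝ)) := by
          rw [Matrix.mul_sub, Matrix.sub_mul, ← h1]
      _ = _ := by
          congr 1
          congr 1
          rw [smul_one_eq_diagonal, diagonal_sub]
          rfl
  have hrank : (A - c • 1).rank = (Finset.univ.filter fun i => hA.eigenvalues i ≠ c).card := by
    conv_lhs => rw [hdec, ← Unitary.coe_star]
    simp [-isUnit_iff_ne_zero, -Unitary.coe_star, rank_diagonal, Fintype.card_subtype,
      sub_ne_zero]
  have hrn := LinearMap.finrank_range_add_finrank_ker (A - c • 1).mulVecLin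
  rw [Module.finrank_fintype_fun_eq_card] at hrn
  have hcards := Finset.card_filter_add_card_filter_not
    (s := (Finset.univ : Finset n)) (p := fun i => hA.eigenvalues i = c)
  rw [Finset.card_univ] at hcards
  have h2 : (A - c • 1).rank = finrank ℝ (LinearMap.range (A - c • 1).mulVecLin) := rfl
  simp only [ne_eq] at hrank
  rw [← h2, hrank] at hrn
  omega

/-- the linear map `b ↦ Sum.elim 0 b`. -/
def elimL (α β : Type*) : (β → ℝ) →ₗ[ℝ] (α ⊕ β → ℝ) where
  toFun b := Sum.elim 0 b
  map_add' b b' := by funext x; cases x <;> simp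
  map_smul' c b := by funext x; cases x <;> simp

lemma elimL_injective (α β : Type*) : Function.Injective (elimL α β) := by
  intro b b' h
  funext c
  exact congrFun h (Sum.inr c)

set_option maxHeartbeats 1000000 in
theorem stmt19 (s : ℕ) (hs : 1 ≤ s) (k : Fin s → ℕ) (hk : ∀ i, 1 ≤ k i)
    (M : Matrix (Fin s ⊕ (Σ i : Fin s, Fin (k i))) (Σ i : Fin s, Fin (k i)) ℝ)
    (hMtop : ∀ (r : Fin s) (c : Σ i : Fin s, Fin (k i)),
      M (Sum.inl r) c = if (c.1 : ℕ) ≤ (r : ℕ) then 1 else 0)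
    (hMbot : ∀ (x c : Σ i : Fin s, Fin (k i)),
      M (Sum.inr x) c = if x = c then 1 else 0) :
    (Mᵀ * M - 1).rank = s ∧
    (Mᵀ * M - 1).PosSemidef ∧
    ∃ hA : (-(M * Mᵀ - 1)).IsHermitian,
      (Finset.univ.filter (fun i => hA.eigenvalues i < 0)).card = s ∧
      Module.finrank ℝ (LinearMap.ker (-(M * Mᵀ - 1)).mulVecLin) =
        (∑ i, k i) - s := by
  set T : Matrix (Fin s) (Σ i : Fin s, Fin (k i)) ℝ := M.submatrix Sum.inl id with hTdef
  have hT : ∀ (r : Fin s) (c : Σ i : Fin s, Fin (k i)), T r c = if (c.1 : ℕ) ≤ (r : ℕ) then 1 else 0 := by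
    intro r c; rw [hTdef]; exact hMtop r c
  have hcardι : Fintype.card (Σ i : Fin s, Fin (k i)) = ∑ i, k i := by
    simp [Fintype.card_sigma]
  have hsN : s ≤ ∑ i, k i := by
    calc s = ∑ _i : Fin s, 1 := by simp
    _ ≤ ∑ i, k i := Finset.sum_le_sum fun i _ => hk i
  -- kernel of Tᵀ is trivial
  have hkerTt : ∀ y : Fin s → ℝ, Tᵀ *ᵥ y = 0 → y = 0 := by
    intro y hy
    have hsum : ∀ i : Fin s, ∑ r ∈ Finset.univ.filter (fun r => i ≤ r), y r = 0 := by
      intro i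
      have h0 := congrFun hy ⟨i, ⟨0, hk i⟩⟩
      simp only [mulVec, dotProduct, transpose_apply, Pi.zero_apply, hT] at h0
      rw [← h0, Finset.sum_filter]
      refine Finset.sum_congr rfl fun r _ => ?_
      by_cases h : i ≤ r
      · rw [if_pos h, if_pos (by exact_mod_cast h)]
        ring
      · rw [if_neg h, if_neg (by exact_mod_cast h)]
        ring
    have key : ∀ d (i : Fin s), s - (i : ℕ) ≤ d → y i = 0 := by
      intro d
      induction d with
      | zero => intro i hle; exact absurd i.isLt (by omega)
      | succ d ih =>
        intro i hle
        have hsplit : (Finset.univ.filter fun r : Fin s => i ≤ r)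
            = insert i (Finset.univ.filter fun r : Fin s => i < r) := by
          ext r
          simp only [Finset.mem_filter, Finset.mem_univ, true_and, Finset.mem_insert]
          rw [Fin.le_def, Fin.lt_def, Fin.ext_iff]
          omega
        have h2 := hsum i
        rw [hsplit, Finset.sum_insert (by simp)] at h2
        have h3 : ∑ r ∈ Finset.univ.filter (fun r : Fin s => i < r), y r = 0 := by
          refine Finset.sum_eq_zero fun r hr => ?_
          have hlt := (Finset.mem_filter.mp hr).2
          rw [Fin.lt_def] at hlt
          exact ih r (by omega)
        rw [h3, add_zero] at h2
        exact h2
    funext i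
    exact key s i (by omega)
  -- Mᵀ M - 1 = Tᵀ T
  have hMM : Mᵀ * M - 1 = Tᵀ * T := by
    ext c c'
    simp only [Matrix.sub_apply, Matrix.mul_apply, transpose_apply, Matrix.one_apply]
    rw [Fintype.sum_sum_type]
    have h1 : ∑ x : (Σ i : Fin s, Fin (k i)), M (Sum.inr x) c * M (Sum.inr x) c' = if c = c' then 1 else 0 := by
      simp only [hMbot, ite_mul, one_mul, zero_mul]
      rw [Finset.sum_ite_eq' (Finset.univ) c (fun x => if x = c' then (1:ℝ) else 0)]
      simp
    rw [h1]
    have h2 : ∀ r, M (Sum.inl r) c * M (Sum.inl r) c' = T r c * T r c' := by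
      intro r; rw [hTdef]; rfl
    simp only [h2]
    ring
  -- rank T = s
  have hTtrank : Tᵀ.rank = s := by
    have hker : LinearMap.ker (Tᵀ).mulVecLin = ⊥ :=
      LinearMap.ker_eq_bot'.mpr fun y hy => hkerTt y hy
    have h := LinearMap.finrank_range_add_finrank_ker (Tᵀ).mulVecLin
    rw [hker, finrank_bot, add_zero, Module.finrank_fintype_fun_eq_card, Fintype.card_fin] at h
    exact h
  have hTrank : T.rank = s := by rw [← rank_transpose]; exact hTtrank
  have hrank1 : (Mᵀ * M - 1).rank = s := by
    rw [hMM, rank_transpose_mul_self]; exact hTrank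
  have hTH : Tᴴ = Tᵀ := by ext r c; simp [conjTranspose_apply]
  have hPSD : (Mᵀ * M - 1).PosSemidef := by
    rw [hMM, ← hTH]; exact posSemidef_conjTranspose_mul_self T
  refine ⟨hrank1, hPSD, ?_⟩
  have hMH : Mᴴ = Mᵀ := by ext r c; simp [conjTranspose_apply]
  have hMMtH : (M * Mᵀ).IsHermitian := by
    rw [← hMH]; exact isHermitian_mul_conjTranspose_self M
  have hA : (-(M * Mᵀ - 1)).IsHermitian := (hMMtH.sub isHermitian_one).neg
  have hA1 : -(M * Mᵀ - 1) = 1 - M * Mᵀ := neg_sub _ _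
  -- the `w = Mᵀ *ᵥ v` computation
  have hw : ∀ (v : (Fin s ⊕ (Σ i : Fin s, Fin (k i))) → ℝ) (c : Σ i : Fin s, Fin (k i)),
      (Mᵀ *ᵥ v) c = (Tᵀ *ᵥ (fun r => v (Sum.inl r))) c + v (Sum.inr c) := by
    intro v c
    simp only [mulVec, dotProduct, transpose_apply]
    rw [Fintype.sum_sum_type]
    have e2 : ∑ x : (Σ i : Fin s, Fin (k i)), M (Sum.inr x) c * v (Sum.inr x) = v (Sum.inr c) := by
      simp only [hMbot, ite_mul, one_mul, zero_mul]
      rw [Finset.sum_ite_eq' (Finset.univ) c (fun x => v (Sum.inr x))]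
      simp
    rw [e2]
    congr 1
  have hMvinr : ∀ (u : (Σ i : Fin s, Fin (k i)) → ℝ) (c : Σ i : Fin s, Fin (k i)),
      (M *ᵥ u) (Sum.inr c) = u c := by
    intro u c
    simp only [mulVec, dotProduct, hMbot, ite_mul, one_mul, zero_mul]
    rw [Finset.sum_ite_eq (Finset.univ) c u]
    simp
  have hMvinl : ∀ (u : (Σ i : Fin s, Fin (k i)) → ℝ) (r : Fin s),
      (M *ᵥ u) (Sum.inl r) = (T *ᵥ u) r := by
    intro u r
    rw [hTdef]
    rfl
  have hkerA : LinearMap.ker (-(M * Mᵀ - 1)).mulVecLin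
      = Submodule.map (elimL (Fin s) (Σ i : Fin s, Fin (k i))) (LinearMap.ker T.mulVecLin) := by
    ext v
    simp only [LinearMap.mem_ker, Submodule.mem_map, mulVecLin_apply]
    constructor
    · intro hv
      have hv' : M *ᵥ (Mᵀ *ᵥ v) = v := by
        rw [hA1, sub_mulVec, one_mulVec] at hv
        rw [mulVec_mulVec]
        exact (sub_eq_zero.mp hv).symm
      have ha0 : Tᵀ *ᵥ (fun r => v (Sum.inl r)) = 0 := by
        funext c
        have h1 := congrFun hv' (Sum.inr c)
        rw [hMvinr, hw v c] at h1
        simpa using h1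
      have ha : (fun r => v (Sum.inl r)) = 0 := hkerTt _ ha0
      have hwb : (Mᵀ *ᵥ v) = fun c => v (Sum.inr c) := by
        funext c
        rw [hw v c, ha]
        simp
      refine ⟨fun c => v (Sum.inr c), ?_, ?_⟩
      · funext r
        have h1 := congrFun hv' (Sum.inl r)
        rw [hwb, hMvinl] at h1
        rw [h1]
        exact congrFun ha r
      · funext x
        cases x with
        | inl r => exact (congrFun ha r).symm
        | inr c => rfl
    · rintro ⟨b, hb, rfl⟩
      have hwb : Mᵀ *ᵥ (elimL (Fin s) (Σ i : Fin s, Fin (k i)) b) = b := by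
        funext c
        rw [hw]
        have : (fun r => (elimL (Fin s) (Σ i : Fin s, Fin (k i)) b) (Sum.inl r)) = (0 : Fin s → ℝ) := rfl
        rw [this, mulVec_zero]
        simp [elimL]
      rw [hA1, sub_mulVec, one_mulVec, ← mulVec_mulVec, hwb, sub_eq_zero]
      funext x
      cases x with
      | inl r =>
        rw [hMvinl]
        exact ((congrFun hb r).trans rfl).symm ▸ (by
          have : (T *ᵥ b) r = 0 := congrFun hb r
          simpa [elimL] using this.symm)
      | inr c =>
        rw [hMvinr]
        rfl
  have hfk : Module.finrank ℝ (LinearMap.ker (-(M * Mᵀ - 1)).mulVecLin) = (∑ i, k i) - s := by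
    rw [hkerA]
    rw [← LinearEquiv.finrank_eq (Submodule.equivMapOfInjective _
      (elimL_injective (Fin s) (Σ i : Fin s, Fin (k i))) (LinearMap.ker T.mulVecLin))]
    have h := LinearMap.finrank_range_add_finrank_ker T.mulVecLin
    rw [Module.finrank_fintype_fun_eq_card, hcardι] at h
    have hrT : finrank ℝ (LinearMap.range T.mulVecLin) = s := hTrank
    omega
  refine ⟨hA, ?_, hfk⟩
  have hcard0 : (Finset.univ.filter fun i => hA.eigenvalues i = 0).card = (∑ i, k i) - s := by
    rw [aux_eig_card hA 0]
    have h0 : -(M * Mᵀ - 1) - (0:ℝ) • 1 = -(M * Mᵀ - 1) := by simp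
    rw [h0]
    exact hfk
  have hcs : Fintype.card (Fin s ⊕ (Σ i : Fin s, Fin (k i))) = s + ∑ i, k i := by
    simp [hcardι]
  have hcard1 : (Finset.univ.filter fun i => hA.eigenvalues i = 1).card = s := by
    rw [aux_eig_card hA 1]
    have h1 : -(M * Mᵀ - 1) - (1:ℝ) • 1 = -(M * Mᵀ) := by
      rw [hA1, one_smul]
      abel
    rw [h1]
    have hkerneg : LinearMap.ker (-(M * Mᵀ)).mulVecLin = LinearMap.ker (M * Mᵀ).mulVecLin := by
      ext u
      simp only [LinearMap.mem_ker, mulVecLin_apply, Matrix.neg_mulVec, neg_eq_zero]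
    rw [hkerneg]
    have hkM : LinearMap.ker M.mulVecLin = ⊥ := by
      refine LinearMap.ker_eq_bot'.mpr fun u hu => ?_
      funext c
      have h2 : (M *ᵥ u) (Sum.inr c) = 0 := congrFun hu (Sum.inr c)
      rw [hMvinr] at h2
      exact h2
    have hrM : M.rank = ∑ i, k i := by
      have h := LinearMap.finrank_range_add_finrank_ker M.mulVecLin
      rw [hkM, finrank_bot, add_zero, Module.finrank_fintype_fun_eq_card, hcardι] at h
      exact h
    have hrMMt : (M * Mᵀ).rank = ∑ i, k i := by
      rw [← hMH, rank_self_mul_conjTranspose]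
      exact hrM
    have h := LinearMap.finrank_range_add_finrank_ker (M * Mᵀ).mulVecLin
    rw [Module.finrank_fintype_fun_eq_card, hcs] at h
    have h2 : (M * Mᵀ).rank = finrank ℝ (LinearMap.range (M * Mᵀ).mulVecLin) := rfl
    omega
  have hpos1 : ∀ i, 0 < hA.eigenvalues i → hA.eigenvalues i = 1 := by
    intro i hp
    by_contra hne
    have hAv := hA.mulVec_eigenvectorBasis i
    set lam := hA.eigenvalues i with hlam
    set v : (Fin s ⊕ (Σ i : Fin s, Fin (k i))) → ℝ := ⇑(hA.eigenvectorBasis i) with hv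
    have hvne : v ≠ 0 := by
      intro h0
      apply hA.eigenvectorBasis.orthonormal.ne_zero i
      ext j
      exact congrFun h0 j
    have hBv : (M * Mᵀ) *ᵥ v = (1 - lam) • v := by
      rw [hA1, sub_mulVec, one_mulVec] at hAv
      have h3 : (M * Mᵀ) *ᵥ v = v - lam • v := by rw [← hAv]; abel
      rw [h3, sub_smul, one_smul]
    set w := Mᵀ *ᵥ v with hwdef
    have hwne : w ≠ 0 := by
      intro h0
      have h1 : (M * Mᵀ) *ᵥ v = 0 := by
        rw [← mulVec_mulVec, ← hwdef, h0, mulVec_zero]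
      rw [hBv] at h1
      rcases smul_eq_zero.mp h1 with h2 | h2
      · exact hne (by linarith [sub_eq_zero.mp h2])
      · exact hvne h2
    have hMw : M *ᵥ w = (1 - lam) • v := by
      rw [hwdef, mulVec_mulVec, hBv]
    have hMtMw : (Mᵀ * M) *ᵥ w = (1 - lam) • w := by
      rw [← mulVec_mulVec, hMw, mulVec_smul, ← hwdef]
    have hps := hPSD.dotProduct_mulVec_nonneg w
    rw [star_trivial] at hps
    have hdot : dotProduct w ((Mᵀ * M - 1) *ᵥ w) = -lam * dotProduct w w := by
      rw [sub_mulVec, one_mulVec, dotProduct_sub, hMtMw, dotProduct_smul, smul_eq_mul]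
      ring
    rw [hdot] at hps
    have hww : 0 < dotProduct w w := by
      have h1 : dotProduct w w ≠ 0 := fun h => hwne (dotProduct_self_eq_zero.mp h)
      have h2 : 0 ≤ dotProduct w w := Finset.sum_nonneg fun j _ => mul_self_nonneg (w j)
      exact lt_of_le_of_ne h2 (Ne.symm h1)
    have h3 : -lam * dotProduct w w < 0 :=
      mul_neg_of_neg_of_pos (neg_lt_zero.mpr hp) hww
    exact absurd hps (not_le.mpr h3)
  have hdisj : Disjoint (Finset.univ.filter fun i => hA.eigenvalues i = 0)
      (Finset.univ.filter fun i => hA.eigenvalues i = 1) := by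
    rw [Finset.disjoint_filter]
    intro x _ h0 h1
    rw [h0] at h1
    norm_num at h1
  have hset : (Finset.univ.filter fun i => hA.eigenvalues i < 0)
      = Finset.univ \ ((Finset.univ.filter fun i => hA.eigenvalues i = 0)
        ∪ (Finset.univ.filter fun i => hA.eigenvalues i = 1)) := by
    ext i
    simp only [Finset.mem_filter, Finset.mem_univ, true_and, Finset.mem_sdiff,
      Finset.mem_union, not_or]
    constructor
    · intro h
      exact ⟨fun h0 => by rw [h0] at h; exact lt_irrefl 0 h,
        fun h1 => by rw [h1] at h; linarith⟩
    · rintro ⟨h0, h1⟩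
      rcases lt_trichotomy (hA.eigenvalues i) 0 with h | h | h
      · exact h
      · exact absurd h h0
      · exact absurd (hpos1 i h) h1
  rw [hset, Finset.card_sdiff_of_subset (Finset.subset_univ _),
    Finset.card_union_of_disjoint hdisj, Finset.card_univ, hcs, hcard0, hcard1]
  omega
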